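/- Let g ≥ 2 be an integer. For every integer k, there exists a representation k = Σ_{i=0}^{N} ε_i g^i with ε_i ∈ {0, ±1, …, ±⌊g/2⌋} such that Σ_i |ε_i| = ℓ_g(k), where ℓ_g(k) is the word length of k with respect to S_g = {±g^n : n ∈ ℕ}. In other words, the minimal number of signed powers of g summing to k can always be achieved using coefficients of absolute value at most ⌊g/2⌋ for each power. -/

import Mathlib

/-- The generating set `S_g = {± g^k : k ∈ ℕ}` in `ℤ`. -/
def Sg (g : ℤ) : Set ℤ := {x | ∃ n : ℕ, x = g ^ n ∨ x = -g ^ n}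

/-- The word length of `k` with respect to `S_g`. -/
noncomputable def wlen (g : ℤ) (k : ℤ) : ℕ :=
  sInf {m | ∃ l : List ℤ, (∀ x ∈ l, x ∈ Sg g) ∧ l.length = m ∧ l.sum = k}

namespace StmtAux

lemma sum_extend {α} [AddCommMonoid α] (f : ℕ → α) {M M' : ℕ} (h : M ≤ M')
    (h0 : ∀ j, M ≤ j → f j = 0) :
    ∑ j ∈ Finset.range M', f j = ∑ j ∈ Finset.range M, f j := by
  symm
  apply Finset.sum_subset (Finset.range_subset_range.2 h)
  intro x hx hnx
  exact h0 x (by simp only [Finset.mem_range] at hx hnx; omega)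

lemma sum_split_two {α} [AddCommMonoid α] (f : ℕ → α) {M i : ℕ} (h : i + 1 < M) :
    ∑ j ∈ Finset.range M, f j
      = f i + (f (i+1) + ∑ j ∈ ((Finset.range M).erase i).erase (i+1), f j) := by
  rw [← Finset.add_sum_erase _ f (show i ∈ Finset.range M from Finset.mem_range.2 (by omega))]
  congr 1
  rw [← Finset.add_sum_erase _ f (show i+1 ∈ (Finset.range M).erase i from by
    rw [Finset.mem_erase]; exact ⟨by omega, Finset.mem_range.2 h⟩)]

lemma digits_to_list (g : ℤ) : ∀ (M : ℕ) (ε : ℕ → ℤ), ∃ l : List ℤ,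
    (∀ x ∈ l, x ∈ Sg g) ∧ l.length = ∑ j ∈ Finset.range M, (ε j).natAbs ∧
    l.sum = ∑ j ∈ Finset.range M, ε j * g ^ j := by
  intro M
  induction M with
  | zero => exact fun ε => ⟨[], by simp, by simp, by simp⟩
  | succ M IH =>
    intro ε
    obtain ⟨l, hmem, hlen, hsum⟩ := IH ε
    rcases Int.natAbs_eq (ε M) with he | he
    · refine ⟨l ++ List.replicate (ε M).natAbs (g ^ M), ?_, ?_, ?_⟩
      · intro x hx
        rcases List.mem_append.1 hx with h | h
        · exact hmem x h
        · exact ⟨M, Or.inl (List.eq_of_mem_replicate h)⟩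
      · simp [hlen, Finset.sum_range_succ]
      · rw [List.sum_append, hsum, List.sum_replicate, Finset.sum_range_succ,
          nsmul_eq_mul]
        have h3 : ((ε M).natAbs : ℤ) = ε M := by omega
        rw [h3]
    · refine ⟨l ++ List.replicate (ε M).natAbs (-g ^ M), ?_, ?_, ?_⟩
      · intro x hx
        rcases List.mem_append.1 hx with h | h
        · exact hmem x h
        · exact ⟨M, Or.inr (List.eq_of_mem_replicate h)⟩
      · simp [hlen, Finset.sum_range_succ]
      · rw [List.sum_append, hsum, List.sum_replicate, Finset.sum_range_succ,
          nsmul_eq_mul]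
        have h3 : ((ε M).natAbs : ℤ) = -ε M := by omega
        rw [h3]
        ring

lemma wlen_le (g k : ℤ) (M : ℕ) (ε : ℕ → ℤ)
    (hsum : ∑ j ∈ Finset.range M, ε j * g ^ j = k) :
    wlen g k ≤ ∑ j ∈ Finset.range M, (ε j).natAbs := by
  obtain ⟨l, hmem, hlen, hsum'⟩ := digits_to_list g M ε
  exact Nat.sInf_le ⟨l, hmem, hlen, hsum'.trans hsum⟩

lemma list_to_digits (g : ℤ) : ∀ l : List ℤ, (∀ x ∈ l, x ∈ Sg g) →
    ∃ (M : ℕ) (ε : ℕ → ℤ), (∀ j, M ≤ j → ε j = 0) ∧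
      (∑ j ∈ Finset.range M, ε j * g ^ j = l.sum) ∧
      (∑ j ∈ Finset.range M, (ε j).natAbs ≤ l.length) := by
  intro l
  induction l with
  | nil => exact fun _ => ⟨0, fun _ => 0, fun _ _ => rfl, by simp, by simp⟩
  | cons x l IH =>
    intro hmem
    obtain ⟨M, ε, hsupp, hsum, hwt⟩ := IH (fun y hy => hmem y (List.mem_cons_of_mem _ hy))
    obtain ⟨n, hn⟩ := hmem x List.mem_cons_self
    obtain ⟨s, hs, hx⟩ : ∃ s : ℤ, (s = 1 ∨ s = -1) ∧ x = s * g ^ n := by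
      rcases hn with h | h
      · exact ⟨1, Or.inl rfl, by rw [h]; ring⟩
      · exact ⟨-1, Or.inr rfl, by rw [h]; ring⟩
    refine ⟨max M (n+1), fun j => ε j + if j = n then s else 0, ?_, ?_, ?_⟩
    · intro j hj
      have hj' : M ≤ j := le_trans (le_max_left _ _) hj
      have hjn : j ≠ n := by
        have := le_trans (le_max_right _ _) hj; omega
      show ε j + (if j = n then s else 0) = 0
      rw [hsupp j hj', if_neg hjn, add_zero]
    · have h1 : ∀ j ∈ Finset.range (max M (n+1)),
          (ε j + if j = n then s else 0) * g ^ j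
          = ε j * g ^ j + (if j = n then s else 0) * g ^ j :=
        fun j _ => add_mul _ _ _
      rw [Finset.sum_congr rfl h1, Finset.sum_add_distrib]
      have h2 : ∑ j ∈ Finset.range (max M (n+1)), (if j = n then s else 0) * g ^ j
          = s * g ^ n := by
        rw [Finset.sum_eq_single n]
        · simp
        · intro b _ hb; rw [if_neg hb, zero_mul]
        · intro hn'; exact absurd (Finset.mem_range.2 (by omega)) hn'
      rw [h2, sum_extend (fun j => ε j * g ^ j) (le_max_left _ _)
        (fun j hj => by show ε j * g ^ j = 0; rw [hsupp j hj, zero_mul]), hsum, List.sum_cons, hx]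
      ring
    · calc ∑ j ∈ Finset.range (max M (n+1)), (ε j + if j = n then s else 0).natAbs
          ≤ ∑ j ∈ Finset.range (max M (n+1)), ((ε j).natAbs + if j = n then 1 else 0) := by
            apply Finset.sum_le_sum
            intro j _
            rcases hs with h | h <;> subst h <;> by_cases hj : j = n <;>
              simp only [hj, if_pos, if_neg, if_true, if_false] <;> omega
        _ = (∑ j ∈ Finset.range (max M (n+1)), (ε j).natAbs) + 1 := by
            rw [Finset.sum_add_distrib,
              Finset.sum_ite_eq' (Finset.range (max M (n+1))) n (fun _ => 1),
              if_pos (Finset.mem_range.2 (by omega))]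
        _ ≤ l.length + 1 := by
            rw [sum_extend (fun j => (ε j).natAbs) (le_max_left _ _)
              (fun j hj => by show (ε j).natAbs = 0; rw [hsupp j hj]; rfl)]
            omega
        _ = (x :: l).length := by simp

lemma exists_min_digits (g : ℤ) (k : ℤ) :
    ∃ (M : ℕ) (ε : ℕ → ℤ), (∀ j, M ≤ j → ε j = 0) ∧
      (∑ j ∈ Finset.range M, ε j * g ^ j = k) ∧
      (∑ j ∈ Finset.range M, (ε j).natAbs = wlen g k) := by
  have hne : {m | ∃ l : List ℤ, (∀ x ∈ l, x ∈ Sg g) ∧ l.length = m ∧ l.sum = k}.Nonempty := by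
    rcases Int.natAbs_eq k with hk | hk
    · refine ⟨k.natAbs, List.replicate k.natAbs 1, ?_, List.length_replicate, ?_⟩
      · intro x hx
        exact ⟨0, Or.inl (by rw [List.eq_of_mem_replicate hx, pow_zero])⟩
      · rw [List.sum_replicate, nsmul_eq_mul, mul_one, ← hk]
    · refine ⟨k.natAbs, List.replicate k.natAbs (-1), ?_, List.length_replicate, ?_⟩
      · intro x hx
        exact ⟨0, Or.inr (by rw [List.eq_of_mem_replicate hx, pow_zero])⟩
      · rw [List.sum_replicate, nsmul_eq_mul]
        omega
  have hmem : wlen g k ∈ {m | ∃ l : List ℤ, (∀ x ∈ l, x ∈ Sg g) ∧ l.length = m ∧ l.sum = k} :=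
    Nat.sInf_mem hne
  obtain ⟨l, hlm, hll, hls⟩ := hmem
  obtain ⟨M, ε, hsupp, hsum, hwt⟩ := list_to_digits g l hlm
  rw [hls] at hsum
  refine ⟨M, ε, hsupp, hsum, le_antisymm ?_ (wlen_le g k M ε hsum)⟩
  rw [← hll]
  exact hwt

lemma lemC (g : ℤ) (hg : 2 ≤ g) (k : ℤ) : ∀ a : ℕ, ∀ (ε : ℕ → ℤ) (M i : ℕ),
    (ε i).natAbs = a → i + 1 < M →
    (∀ j, M ≤ j → ε j = 0) →
    (∑ j ∈ Finset.range M, ε j * g ^ j = k) →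
    (∑ j ∈ Finset.range M, (ε j).natAbs = wlen g k) →
    ∃ ε' : ℕ → ℤ,
      (∀ j, M ≤ j → ε' j = 0) ∧
      (∑ j ∈ Finset.range M, ε' j * g ^ j = k) ∧
      (∑ j ∈ Finset.range M, (ε' j).natAbs = wlen g k) ∧
      (ε' i).natAbs ≤ (g/2).toNat ∧
      (∀ j, j ≠ i → j ≠ i + 1 → ε' j = ε j) ∧
      (ε i ≠ 0 → ε' i ≠ 0) := by
  intro a
  induction a using Nat.strong_induction_on with
  | _ a IH =>
  intro ε M i ha hi hsupp hsum hwt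
  by_cases hb : (ε i).natAbs ≤ (g/2).toNat
  · exact ⟨ε, hsupp, hsum, hwt, hb, fun _ _ _ => rfl, fun h => h⟩
  · obtain ⟨s, hs⟩ : ∃ s : ℤ, (s = 1 ∧ 0 < ε i) ∨ (s = -1 ∧ ε i < 0) := by
      by_cases hp : 0 < ε i
      · exact ⟨1, Or.inl ⟨rfl, hp⟩⟩
      · exact ⟨-1, Or.inr ⟨rfl, by omega⟩⟩
    set ε₁ : ℕ → ℤ := fun j => if j = i then ε i - s * g else if j = i + 1 then ε (i+1) + s else ε j with hε₁
    have e1i : ε₁ i = ε i - s * g := by simp [hε₁]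
    have e1i1 : ε₁ (i+1) = ε (i+1) + s := by simp [hε₁]
    have e1off : ∀ j, j ≠ i → j ≠ i+1 → ε₁ j = ε j := fun j h1 h2 => by
      simp [hε₁, h1, h2]
    have A1 : (ε i - s * g).natAbs + 1 ≤ (ε i).natAbs := by
      rcases hs with ⟨hs, h⟩ | ⟨hs, h⟩ <;> subst hs <;> omega
    have A2 : (ε (i+1) + s).natAbs ≤ (ε (i+1)).natAbs + 1 := by
      rcases hs with ⟨hs, h⟩ | ⟨hs, h⟩ <;> subst hs <;> omega
    have hrest : ∑ j ∈ ((Finset.range M).erase i).erase (i+1), ε₁ j * g ^ j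
        = ∑ j ∈ ((Finset.range M).erase i).erase (i+1), ε j * g ^ j := by
      refine Finset.sum_congr rfl fun j hj => ?_
      have h1 := Finset.mem_erase.1 hj
      have h2 := Finset.mem_erase.1 h1.2
      rw [e1off j h2.1 h1.1]
    have hrestN : ∑ j ∈ ((Finset.range M).erase i).erase (i+1), (ε₁ j).natAbs
        = ∑ j ∈ ((Finset.range M).erase i).erase (i+1), (ε j).natAbs := by
      refine Finset.sum_congr rfl fun j hj => ?_
      have h1 := Finset.mem_erase.1 hj
      have h2 := Finset.mem_erase.1 h1.2
      rw [e1off j h2.1 h1.1]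
    have hsum₁ : ∑ j ∈ Finset.range M, ε₁ j * g ^ j = k := by
      rw [sum_split_two (fun j => ε j * g ^ j) hi] at hsum
      rw [sum_split_two (fun j => ε₁ j * g ^ j) hi, hrest, e1i, e1i1, ← hsum, pow_succ]
      ring
    have hge : wlen g k ≤ ∑ j ∈ Finset.range M, (ε₁ j).natAbs := wlen_le g k M ε₁ hsum₁
    rw [sum_split_two (fun j => (ε₁ j).natAbs) hi, hrestN, e1i, e1i1] at hge
    rw [sum_split_two (fun j => (ε j).natAbs) hi] at hwt
    have hwt₁ : ∑ j ∈ Finset.range M, (ε₁ j).natAbs = wlen g k := by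
      rw [sum_split_two (fun j => (ε₁ j).natAbs) hi, hrestN, e1i, e1i1]
      omega
    have hnz₁ : ε₁ i ≠ 0 := by
      rw [e1i]
      have : 1 ≤ (g/2).toNat := by omega
      omega
    have hsupp₁ : ∀ j, M ≤ j → ε₁ j = 0 := fun j hj => by
      rw [e1off j (by omega) (by omega), hsupp j hj]
    have hlt : (ε₁ i).natAbs < a := by rw [e1i, ← ha]; omega
    obtain ⟨ε', h1, h2, h3, h4, h5, h6⟩ := IH (ε₁ i).natAbs hlt ε₁ M i rfl hi hsupp₁ hsum₁ hwt₁
    exact ⟨ε', h1, h2, h3, h4,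
      fun j hj1 hj2 => (h5 j hj1 hj2).trans (e1off j hj1 hj2),
      fun _ => h6 hnz₁⟩

lemma finish (g : ℤ) (hg : 2 ≤ g) (k : ℤ) (M : ℕ) (ε : ℕ → ℤ)
    (hsupp : ∀ j, M ≤ j → ε j = 0)
    (hsum : ∑ j ∈ Finset.range M, ε j * g ^ j = k)
    (hwt : ∑ j ∈ Finset.range M, (ε j).natAbs = wlen g k)
    (good : ∀ j, (ε j).natAbs ≤ (g/2).toNat) :
    ∃ (N : ℕ) (ε : ℕ → ℤ),
      (∀ i, |ε i| ≤ g / 2) ∧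
      (∑ i ∈ Finset.range (N + 1), ε i * g ^ i) = k ∧
      (∑ i ∈ Finset.range (N + 1), (ε i).natAbs) = wlen g k := by
  refine ⟨M, ε, ?_, ?_, ?_⟩
  · intro i
    have h := good i
    rw [Int.abs_eq_natAbs]
    omega
  · rw [sum_extend (fun j => ε j * g ^ j) (Nat.le_succ M)
      (fun j hj => by show ε j * g ^ j = 0; rw [hsupp j hj, zero_mul])]
    exact hsum
  · rw [sum_extend (fun j => (ε j).natAbs) (Nat.le_succ M)
      (fun j hj => by show (ε j).natAbs = 0; rw [hsupp j hj]; rfl)]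
    exact hwt

lemma main (g : ℤ) (hg : 2 ≤ g) (k : ℤ) : ∀ m L : ℕ, ∀ (ε : ℕ → ℤ) (M i : ℕ),
    M = i + L →
    (∀ j, M ≤ j → ε j = 0) →
    (∑ j ∈ Finset.range M, ε j * g ^ j = k) →
    (∑ j ∈ Finset.range M, (ε j).natAbs = wlen g k) →
    (∀ j, j < i → (ε j).natAbs ≤ (g/2).toNat) →
    (∑ j ∈ Finset.Ico i M, (ε j).natAbs = m) →
    ∃ (N : ℕ) (ε : ℕ → ℤ),
      (∀ i, |ε i| ≤ g / 2) ∧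
      (∑ i ∈ Finset.range (N + 1), ε i * g ^ i) = k ∧
      (∑ i ∈ Finset.range (N + 1), (ε i).natAbs) = wlen g k := by
  intro m
  induction m using Nat.strong_induction_on with
  | _ m IH1 =>
  intro L
  induction L with
  | zero =>
    intro ε M i hM hsupp hsum hwt hgood _
    refine finish g hg k M ε hsupp hsum hwt fun j => ?_
    rcases lt_or_ge j i with h | h
    · exact hgood j h
    · rw [hsupp j (by omega)]; exact Nat.zero_le _
  | succ L IH2 =>
    intro ε M i hM hsupp hsum hwt hgood hm
    by_cases hz : ε i = 0
    · have hiM : i < M := by omega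
      have hm' : ∑ j ∈ Finset.Ico (i+1) M, (ε j).natAbs = m := by
        rw [Finset.sum_eq_sum_Ico_succ_bot hiM] at hm
        rw [hz] at hm
        simpa using hm
      refine IH2 ε M (i+1) (by omega) hsupp hsum hwt ?_ hm'
      intro j hj
      rcases lt_or_ge j i with h | h
      · exact hgood j h
      · have : j = i := by omega
        rw [this, hz]; exact Nat.zero_le _
    · set M₂ := max M (i+2) with hM₂
      have hMM₂ : M ≤ M₂ := le_max_left _ _
      have hi2 : i + 2 ≤ M₂ := le_max_right _ _
      have hsupp₂ : ∀ j, M₂ ≤ j → ε j = 0 := fun j hj => hsupp j (le_trans hMM₂ hj)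
      have hsum₂ : ∑ j ∈ Finset.range M₂, ε j * g ^ j = k := by
        rw [sum_extend (fun j => ε j * g ^ j) hMM₂
          (fun j hj => by show ε j * g ^ j = 0; rw [hsupp j hj, zero_mul])]
        exact hsum
      have hwt₂ : ∑ j ∈ Finset.range M₂, (ε j).natAbs = wlen g k := by
        rw [sum_extend (fun j => (ε j).natAbs) hMM₂
          (fun j hj => by show (ε j).natAbs = 0; rw [hsupp j hj]; rfl)]
        exact hwt
      obtain ⟨ε', h'supp, h'sum, h'wt, h'bound, h'off, h'nz⟩ :=
        lemC g hg k ((ε i).natAbs) ε M₂ i rfl (by omega) hsupp₂ hsum₂ hwt₂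
      have hsplit : ∀ f : ℕ → ℕ, ∑ j ∈ Finset.range M₂, f j
          = (∑ j ∈ Finset.range i, f j) + ∑ j ∈ Finset.Ico i M₂, f j := by
        intro f
        rw [Finset.range_eq_Ico, Finset.range_eq_Ico, Finset.sum_Ico_consecutive f (Nat.zero_le i) (show i ≤ M₂ by omega)]
      have hhead : ∑ j ∈ Finset.range i, (ε' j).natAbs
          = ∑ j ∈ Finset.range i, (ε j).natAbs := by
        refine Finset.sum_congr rfl fun j hj => ?_
        have hji := Finset.mem_range.1 hj
        rw [h'off j (by omega) (by omega)]
      have htail : ∑ j ∈ Finset.Ico i M₂, (ε' j).natAbs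
          = ∑ j ∈ Finset.Ico i M₂, (ε j).natAbs := by
        have e1 := hsplit (fun j => (ε' j).natAbs)
        have e2 := hsplit (fun j => (ε j).natAbs)
        rw [h'wt] at e1
        rw [hwt₂] at e2
        omega
      have htail2 : ∑ j ∈ Finset.Ico i M₂, (ε j).natAbs = m := by
        rw [← Finset.sum_Ico_consecutive (fun j => (ε j).natAbs)
          (show i ≤ M by omega) hMM₂, hm]
        have : ∑ j ∈ Finset.Ico M M₂, (ε j).natAbs = 0 := by
          refine Finset.sum_eq_zero fun j hj => ?_
          have := (Finset.mem_Ico.1 hj).1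
          rw [hsupp j this]; rfl
        omega
      have hbot : ∑ j ∈ Finset.Ico i M₂, (ε' j).natAbs
          = (ε' i).natAbs + ∑ j ∈ Finset.Ico (i+1) M₂, (ε' j).natAbs :=
        Finset.sum_eq_sum_Ico_succ_bot (by omega) _
      have hnz : (ε' i).natAbs ≠ 0 := fun h0 => (h'nz hz) (by omega)
      have hlt : ∑ j ∈ Finset.Ico (i+1) M₂, (ε' j).natAbs < m := by omega
      refine IH1 _ hlt (M₂ - (i+1)) ε' M₂ (i+1) (by omega) h'supp h'sum h'wt ?_ rfl
      intro j hj
      rcases lt_or_ge j i with h | h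
      · rw [h'off j (by omega) (by omega)]
        exact hgood j h
      · have : j = i := by omega
        rw [this]
        exact h'bound

end StmtAux

/-- The word length of `k` is achieved by a representation `k = Σ ε_i g^i` with
`|ε_i| ≤ ⌊g/2⌋` and total weight `Σ |ε_i| = ℓ_g(k)`. -/
theorem stmt_18 (g : ℤ) (hg : 2 ≤ g) (k : ℤ) :
    ∃ (N : ℕ) (ε : ℕ → ℤ),
      (∀ i, |ε i| ≤ g / 2) ∧
      (∑ i ∈ Finset.range (N + 1), ε i * g ^ i) = k ∧
      (∑ i ∈ Finset.range (N + 1), (ε i).natAbs) = wlen g k := by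
  obtain ⟨M, ε, hsupp, hsum, hwt⟩ := StmtAux.exists_min_digits g k
  refine StmtAux.main g hg k (wlen g k) M ε M 0 (by omega) hsupp hsum hwt
    (fun j hj => absurd hj (Nat.not_lt_zero j)) ?_
  rw [← Finset.range_eq_Ico]
  exact hwt
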